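/- Let F be a homeomorphism of ℝ² commuting with the unit translations S and T. Then the rotation set ρ_{S,T}(F) (defined via compact sets) is nonempty and bounded. -/

import Mathlib

open Filter Topology Pointwise

noncomputable section

/-- Natural iterates of a homeomorphism. -/
def hnpow {X : Type*} [TopologicalSpace X] (F : X ≃ₜ X) : ℕ → X ≃ₜ X
  | 0 => Homeomorph.refl X
  | n + 1 => (hnpow F n).trans F

/-- Integer iterates of a homeomorphism. -/
def hzpow {X : Type*} [TopologicalSpace X] (F : X ≃ₜ X) : ℤ → X ≃ₜ X
  | Int.ofNat n => hnpow F n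
  | Int.negSucc n => hnpow F.symm (n + 1)

/-- `act U V G m n p = U^{-m} ∘ V^{-n} ∘ G^{p}`. -/
def act {X : Type*} [TopologicalSpace X] (U V G : X ≃ₜ X) (m n p : ℤ) : X ≃ₜ X :=
  ((hzpow G p).trans (hzpow V (-n))).trans (hzpow U (-m))

/-- A sequence in `ℤ³` tends to infinity. -/
def tendsInfty (s : ℕ → ℤ × ℤ × ℤ) : Prop :=
  Tendsto (fun k => |(s k).1| + |(s k).2.1| + |(s k).2.2|) atTop atTop

/-- The rotation set of `G` with respect to `U` and `V`, defined via compact sets: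
`w` belongs to it iff there are a compact `K` and `(m_k, n_k, p_k) ∈ ℤ³` tending to infinity
with `U^{-m_k} V^{-n_k} G^{p_k}(K) ∩ K ≠ ∅` and `(m_k/p_k, n_k/p_k) → w`. -/
def rotSet {X : Type*} [TopologicalSpace X] (G U V : X ≃ₜ X) : Set (ℝ × ℝ) :=
  {w | ∃ K : Set X, IsCompact K ∧ ∃ s : ℕ → ℤ × ℤ × ℤ,
    (∀ k, ((act U V G (s k).1 (s k).2.1 (s k).2.2) '' K ∩ K).Nonempty) ∧
    tendsInfty s ∧
    Tendsto (fun k => ((((s k).1 : ℝ) / ((s k).2.2 : ℝ), ((s k).2.1 : ℝ) / ((s k).2.2 : ℝ)) : ℝ × ℝ))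
      atTop (nhds w)}

/-- Two homeomorphisms commute. -/
def commuting {X : Type*} [TopologicalSpace X] (F G : X ≃ₜ X) : Prop := ∀ x, F (G x) = G (F x)

/-- The unit horizontal translation `S : (x,y) ↦ (x+1,y)`. -/
def S2 : (ℝ × ℝ) ≃ₜ (ℝ × ℝ) := Homeomorph.addRight ((1 : ℝ), (0 : ℝ))

/-- The unit vertical translation `T : (x,y) ↦ (x,y+1)`. -/
def T2 : (ℝ × ℝ) ≃ₜ (ℝ × ℝ) := Homeomorph.addRight ((0 : ℝ), (1 : ℝ))

/-- The displacement set `D(H) = {H(z) - z : z ∈ ℝ²}`. -/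
def disp (H : (ℝ × ℝ) ≃ₜ (ℝ × ℝ)) : Set (ℝ × ℝ) := Set.range fun z => H z - z

/-- `mk2 F a b c = S^a ∘ T^b ∘ F^{-c}`. -/
def mk2 (F : (ℝ × ℝ) ≃ₜ (ℝ × ℝ)) (a b c : ℤ) : (ℝ × ℝ) ≃ₜ (ℝ × ℝ) :=
  ((hzpow F (-c)).trans (hzpow T2 b)).trans (hzpow S2 a)

/-- The projective action of an integer 3×3 matrix in the affine chart. -/
def lhatZ (L : Matrix (Fin 3) (Fin 3) ℤ) (p : ℝ × ℝ) : ℝ × ℝ :=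
  (((L 0 0 : ℝ) * p.1 + (L 0 1 : ℝ) * p.2 + (L 0 2 : ℝ)) /
      ((L 2 0 : ℝ) * p.1 + (L 2 1 : ℝ) * p.2 + (L 2 2 : ℝ)),
   ((L 1 0 : ℝ) * p.1 + (L 1 1 : ℝ) * p.2 + (L 1 2 : ℝ)) /
      ((L 2 0 : ℝ) * p.1 + (L 2 1 : ℝ) * p.2 + (L 2 2 : ℝ)))

namespace Aux

lemma hnpow_succ {X : Type*} [TopologicalSpace X] (F : X ≃ₜ X) (n : ℕ) (x : X) :
    hnpow F (n+1) x = F (hnpow F n x) := rfl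

lemma hnpow_zero {X : Type*} [TopologicalSpace X] (F : X ≃ₜ X) (x : X) :
    hnpow F 0 x = x := rfl

lemma hnpow_addRight (v : ℝ × ℝ) (n : ℕ) (x : ℝ × ℝ) :
    hnpow (Homeomorph.addRight v) n x = x + (n : ℤ) • v := by
  induction n with
  | zero => simp [hnpow_zero]
  | succ n ih =>
      rw [hnpow_succ, ih]
      show _ + _ + v = _
      rw [add_assoc]
      congr 1

lemma hzpow_addRight (v : ℝ × ℝ) (m : ℤ) (x : ℝ × ℝ) :
    hzpow (Homeomorph.addRight v) m x = x + m • v := by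
  cases m with
  | ofNat n => exact hnpow_addRight v n x
  | negSucc n =>
      show hnpow (Homeomorph.addRight v).symm (n+1) x = _
      rw [Homeomorph.addRight_symm, hnpow_addRight]
      congr 1
      rw [Int.negSucc_eq, neg_zsmul, ← smul_neg]
      norm_cast

end Aux

namespace Aux2
open Aux

lemma S2_zpow (m : ℤ) (x : ℝ × ℝ) : hzpow S2 m x = x + ((m : ℝ), 0) := by
  rw [show S2 = Homeomorph.addRight ((1:ℝ), (0:ℝ)) from rfl, hzpow_addRight]
  congr 1
  simp [Prod.smul_def]

lemma T2_zpow (n : ℤ) (x : ℝ × ℝ) : hzpow T2 n x = x + (0, (n : ℝ)) := by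
  rw [show T2 = Homeomorph.addRight ((0:ℝ), (1:ℝ)) from rfl, hzpow_addRight]
  congr 1
  simp [Prod.smul_def]

lemma act_apply (F : (ℝ × ℝ) ≃ₜ (ℝ × ℝ)) (m n p : ℤ) (x : ℝ × ℝ) :
    act S2 T2 F m n p x = hzpow F p x - ((m : ℝ), (n : ℝ)) := by
  show hzpow S2 (-m) (hzpow T2 (-n) (hzpow F p x)) = _
  rw [T2_zpow, S2_zpow]
  push_cast
  apply Prod.ext <;> simp <;> ring

/-- invariance under v implies invariance under m • v -/
lemma zsmul_invariant (F : (ℝ × ℝ) ≃ₜ (ℝ × ℝ)) (v : ℝ × ℝ)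
    (h : ∀ x, F (x + v) = F x + v) (m : ℤ) (x : ℝ × ℝ) :
    F (x + m • v) = F x + m • v := by
  have h' : ∀ x, F (x - v) = F x - v := by
    intro x
    have := h (x - v)
    rw [sub_add_cancel] at this
    rw [eq_sub_iff_add_eq, ← this]
  induction m using Int.induction_on with
  | zero => simp
  | succ k ih =>
      have : x + ((k : ℤ) + 1) • v = (x + (k : ℤ) • v) + v := by
        rw [add_zsmul, one_zsmul, add_assoc]
      rw [this, h, ih, add_zsmul, one_zsmul, add_assoc]
  | pred k ih =>
      have : x + (-(k : ℤ) - 1) • v = (x + (-(k : ℤ)) • v) - v := by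
        rw [sub_zsmul, one_zsmul]; abel
      rw [this, h', ih, sub_zsmul, one_zsmul]; abel

lemma F_intvec (F : (ℝ × ℝ) ≃ₜ (ℝ × ℝ)) (hS : commuting F S2) (hT : commuting F T2)
    (m n : ℤ) (x : ℝ × ℝ) : F (x + ((m : ℝ), (n : ℝ))) = F x + ((m : ℝ), (n : ℝ)) := by
  have h1 : ∀ y, F (y + ((1:ℝ), (0:ℝ))) = F y + ((1:ℝ), (0:ℝ)) := fun y => hS y
  have h2 : ∀ y, F (y + ((0:ℝ), (1:ℝ))) = F y + ((0:ℝ), (1:ℝ)) := fun y => hT y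
  have e : ((m : ℝ), (n : ℝ)) = m • ((1:ℝ), (0:ℝ)) + n • ((0:ℝ), (1:ℝ)) := by
    simp [Prod.smul_def, Prod.ext_iff]
  rw [e, ← add_assoc, zsmul_invariant F _ h2 n, zsmul_invariant F _ h1 m, add_assoc]

lemma exists_disp_bound (F : (ℝ × ℝ) ≃ₜ (ℝ × ℝ)) (hS : commuting F S2) (hT : commuting F T2) :
    ∃ C : ℝ, 0 ≤ C ∧ ∀ z, ‖F z - z‖ ≤ C := by
  obtain ⟨C, hC⟩ := (isCompact_Icc (a := ((0:ℝ), (0:ℝ))) (b := ((1:ℝ), (1:ℝ)))).exists_bound_of_continuousOn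
    ((F.continuous.sub continuous_id).continuousOn)
  refine ⟨max C 0, le_max_right _ _, fun z => ?_⟩
  set w : ℝ × ℝ := (Int.fract z.1, Int.fract z.2) with hw
  have hzw : z = w + ((⌊z.1⌋ : ℝ), (⌊z.2⌋ : ℝ)) := by
    refine Prod.ext ?_ ?_ <;> simp only [hw, Prod.fst_add, Prod.snd_add]
    · exact (Int.fract_add_floor z.1).symm
    · exact (Int.fract_add_floor z.2).symm
  have hwK : w ∈ Set.Icc ((0:ℝ), (0:ℝ)) ((1:ℝ), (1:ℝ)) := by
    constructor <;> constructor <;>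
      simp [hw, Int.fract_nonneg, le_of_lt (Int.fract_lt_one _)]
  have : F z - z = F w - w := by
    rw [hzw, F_intvec F hS hT]
    abel
  rw [this]
  exact le_trans (hC w hwK) (le_max_left _ _)

lemma hnpow_bound {G : (ℝ × ℝ) ≃ₜ (ℝ × ℝ)} {C : ℝ} (h : ∀ z, ‖G z - z‖ ≤ C) (n : ℕ) (z : ℝ × ℝ) :
    ‖hnpow G n z - z‖ ≤ n * C := by
  induction n with
  | zero => simp [hnpow_zero]
  | succ n ih =>
      rw [hnpow_succ]
      have : G (hnpow G n z) - z = (G (hnpow G n z) - hnpow G n z) + (hnpow G n z - z) := by abel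
      rw [this]
      calc ‖_ + _‖ ≤ ‖G (hnpow G n z) - hnpow G n z‖ + ‖hnpow G n z - z‖ := norm_add_le _ _
        _ ≤ C + n * C := add_le_add (h _) ih
        _ = (n + 1 : ℕ) * C := by push_cast; ring

lemma hzpow_bound {F : (ℝ × ℝ) ≃ₜ (ℝ × ℝ)} {C : ℝ} (h : ∀ z, ‖F z - z‖ ≤ C) (p : ℤ) (z : ℝ × ℝ) :
    ‖hzpow F p z - z‖ ≤ |(p : ℝ)| * C := by
  have hsymm : ∀ z, ‖F.symm z - z‖ ≤ C := by
    intro z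
    have : F.symm z - z = -(F (F.symm z) - F.symm z) := by
      rw [F.apply_symm_apply]; abel
    rw [this, norm_neg]
    exact h _
  cases p with
  | ofNat n =>
      have := hnpow_bound h n z
      calc ‖hzpow F (Int.ofNat n) z - z‖ = ‖hnpow F n z - z‖ := rfl
        _ ≤ n * C := this
        _ = |((Int.ofNat n : ℤ) : ℝ)| * C := by congr 1; simp
  | negSucc n =>
      have := hnpow_bound hsymm (n+1) z
      calc ‖hzpow F (Int.negSucc n) z - z‖ = ‖hnpow F.symm (n+1) z - z‖ := rfl
        _ ≤ (n+1 : ℕ) * C := this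
        _ ≤ |((Int.negSucc n : ℤ) : ℝ)| * C := by
            apply le_of_eq; congr 1
            rw [Int.cast_negSucc, abs_neg]
            rw [abs_of_nonneg (by positivity)]

end Aux2

namespace Aux3
open Aux Aux2

lemma abs_floor_le (x : ℝ) : |(⌊x⌋ : ℝ)| ≤ |x| + 1 := by
  rw [abs_le]
  constructor
  · linarith [Int.sub_one_lt_floor x, neg_abs_le x]
  · linarith [Int.floor_le x, le_abs_self x]

lemma rotSet_nonempty (F : (ℝ × ℝ) ≃ₜ (ℝ × ℝ)) (hS : commuting F S2) (hT : commuting F T2) :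
    (rotSet F S2 T2).Nonempty := by
  obtain ⟨C, hC0, hC⟩ := exists_disp_bound F hS hT
  set u : ℕ → ℝ × ℝ := fun k => hzpow F ((k : ℤ) + 1) ((0:ℝ), (0:ℝ)) with hu
  set q : ℕ → ℝ × ℝ :=
    fun k => ((⌊(u k).1⌋ : ℝ) / ((k : ℝ) + 1), (⌊(u k).2⌋ : ℝ) / ((k : ℝ) + 1)) with hq
  have hkpos : ∀ k : ℕ, (0:ℝ) < (k : ℝ) + 1 := fun k => by positivity
  have hub : ∀ k, ‖u k‖ ≤ ((k:ℝ) + 1) * C := by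
    intro k
    have h := hzpow_bound hC ((k:ℤ)+1) ((0:ℝ), (0:ℝ))
    have e1 : |(((k:ℤ)+1 : ℤ) : ℝ)| = (k:ℝ) + 1 := by
      push_cast
      rw [abs_of_nonneg (by positivity)]
    have e2 : u k - ((0:ℝ),(0:ℝ)) = u k := by simp [Prod.ext_iff]
    rw [e2, e1] at h
    exact h
  have habs : ∀ k, |(u k).1| ≤ ((k:ℝ)+1) * C ∧ |(u k).2| ≤ ((k:ℝ)+1) * C := by
    intro k
    constructor
    · exact le_trans (by rw [← Real.norm_eq_abs]; exact norm_fst_le (u k)) (hub k)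
    · exact le_trans (by rw [← Real.norm_eq_abs]; exact norm_snd_le (u k)) (hub k)
  have hqball : ∀ k, q k ∈ Metric.closedBall (0 : ℝ × ℝ) (C + 1) := by
    intro k
    rw [Metric.mem_closedBall, dist_zero_right, Prod.norm_def]
    have hb : ∀ x : ℝ, |x| ≤ ((k:ℝ)+1) * C → ‖(⌊x⌋ : ℝ) / ((k:ℝ)+1)‖ ≤ C + 1 := by
      intro x hx
      rw [Real.norm_eq_abs, abs_div, abs_of_pos (hkpos k), div_le_iff₀ (hkpos k)]
      have := abs_floor_le x
      nlinarith [hkpos k]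
    exact max_le (hb _ (habs k).1) (hb _ (habs k).2)
  obtain ⟨w, -, φ, hφ, hconv⟩ :=
    (isCompact_closedBall (0 : ℝ × ℝ) (C + 1)).tendsto_subseq hqball
  refine ⟨w, Set.Icc ((0:ℝ),(0:ℝ)) ((1:ℝ),(1:ℝ)), isCompact_Icc,
    fun k => (⌊(u (φ k)).1⌋, ⌊(u (φ k)).2⌋, (φ k : ℤ) + 1), ?_, ?_, ?_⟩
  · intro k
    have h0 : ((0:ℝ),(0:ℝ)) ∈ Set.Icc ((0:ℝ),(0:ℝ)) ((1:ℝ),(1:ℝ)) := by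
      constructor <;> constructor <;> norm_num
    refine ⟨act S2 T2 F _ _ _ ((0:ℝ),(0:ℝ)), ⟨((0:ℝ),(0:ℝ)), h0, rfl⟩, ?_⟩
    rw [act_apply]
    constructor <;> constructor <;> simp only [Prod.fst_sub, Prod.snd_sub]
    · linarith [Int.floor_le (hzpow F ((φ k : ℤ)+1) ((0:ℝ),(0:ℝ))).1]
    · linarith [Int.floor_le (hzpow F ((φ k : ℤ)+1) ((0:ℝ),(0:ℝ))).2]
    · linarith [Int.lt_floor_add_one (hzpow F ((φ k : ℤ)+1) ((0:ℝ),(0:ℝ))).1]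
    · linarith [Int.lt_floor_add_one (hzpow F ((φ k : ℤ)+1) ((0:ℝ),(0:ℝ))).2]
  · rw [tendsInfty]
    refine tendsto_atTop_mono ?_ (tendsto_natCast_atTop_atTop (R := ℤ))
    · intro k
      have h1 : (k : ℤ) ≤ (φ k : ℤ) := by exact_mod_cast hφ.le_apply
      have h2 : |(φ k : ℤ) + 1| = (φ k : ℤ) + 1 := abs_of_nonneg (by positivity)
      simp only []
      rw [h2]
      have := abs_nonneg (⌊(u (φ k)).1⌋)
      have := abs_nonneg (⌊(u (φ k)).2⌋)
      linarith
  · have : (fun k => (((⌊(u (φ k)).1⌋ : ℤ) : ℝ) / (((φ k : ℤ) + 1 : ℤ) : ℝ),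
        ((⌊(u (φ k)).2⌋ : ℤ) : ℝ) / (((φ k : ℤ) + 1 : ℤ) : ℝ))) = q ∘ φ := by
      funext k
      simp only [hq, Function.comp_apply]
      push_cast
      rfl
    rw [this]
    exact hconv

end Aux3

namespace Aux4
open Aux Aux2 Aux3

lemma rotSet_bounded (F : (ℝ × ℝ) ≃ₜ (ℝ × ℝ)) (hS : commuting F S2) (hT : commuting F T2) :
    Bornology.IsBounded (rotSet F S2 T2) := by
  obtain ⟨C, hC0, hC⟩ := exists_disp_bound F hS hT
  apply (Metric.isBounded_closedBall (x := (0 : ℝ × ℝ)) (r := C + 1)).subset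
  rintro w ⟨K, hK, s, hint, hinf, hlim⟩
  obtain ⟨r, hr⟩ := hK.isBounded.subset_closedBall 0
  set R : ℝ := max r 0 with hR
  have hR0 : 0 ≤ R := le_max_right _ _
  have hrR : K ⊆ Metric.closedBall 0 R :=
    hr.trans (Metric.closedBall_subset_closedBall (le_max_left _ _))
  have key : ∀ k, |((s k).1 : ℝ)| ≤ |((s k).2.2 : ℝ)| * C + 2 * R ∧
      |((s k).2.1 : ℝ)| ≤ |((s k).2.2 : ℝ)| * C + 2 * R := by
    intro k
    obtain ⟨y, ⟨x, hxK, hxy⟩, hyK⟩ := hint k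
    rw [act_apply] at hxy
    have hmn : ((((s k).1 : ℝ)), (((s k).2.1 : ℝ))) =
        (hzpow F (s k).2.2 x - x) + (x - y) := by
      rw [← hxy]; abel
    have hxR : ‖x‖ ≤ R := by simpa using hrR hxK
    have hyR : ‖y‖ ≤ R := by simpa using hrR hyK
    have hnorm : ‖((((s k).1 : ℝ)), (((s k).2.1 : ℝ)))‖ ≤ |((s k).2.2 : ℝ)| * C + 2 * R := by
      rw [hmn]
      calc ‖_ + _‖ ≤ ‖hzpow F (s k).2.2 x - x‖ + ‖x - y‖ := norm_add_le _ _
        _ ≤ |((s k).2.2 : ℝ)| * C + (‖x‖ + ‖y‖) :=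
            add_le_add (hzpow_bound hC _ _) (norm_sub_le _ _)
        _ ≤ |((s k).2.2 : ℝ)| * C + 2 * R := by linarith
    constructor
    · exact le_trans (by rw [← Real.norm_eq_abs]; exact norm_fst_le (((((s k).1 : ℝ)), (((s k).2.1 : ℝ))) : ℝ × ℝ)) hnorm
    · exact le_trans (by rw [← Real.norm_eq_abs]; exact norm_snd_le (((((s k).1 : ℝ)), (((s k).2.1 : ℝ))) : ℝ × ℝ)) hnorm
  set M : ℝ := max (2 * R) 1 with hM
  have hM1 : (1 : ℝ) ≤ M := le_max_right _ _
  have hplarge : ∀ᶠ k in atTop, M ≤ |((s k).2.2 : ℝ)| := by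
    have hNlarge : ∀ᶠ k in atTop,
        (⌈M * (2 * C + 1) + 4 * R⌉ + 1 : ℤ) ≤ |(s k).1| + |(s k).2.1| + |(s k).2.2| :=
      hinf.eventually_ge_atTop _
    filter_upwards [hNlarge] with k hk
    have hsum : (|(s k).1| + |(s k).2.1| + |(s k).2.2| : ℝ) ≤
        |((s k).2.2 : ℝ)| * (2 * C + 1) + 4 * R := by
      have h1 := (key k).1
      have h2 := (key k).2
      push_cast
      push_cast at h1 h2
      nlinarith
    have hcast : (M * (2 * C + 1) + 4 * R) < (|(s k).1| + |(s k).2.1| + |(s k).2.2| : ℝ) := by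
      have h1 : (M * (2 * C + 1) + 4 * R) ≤ (⌈M * (2 * C + 1) + 4 * R⌉ : ℝ) := Int.le_ceil _
      have h2 : ((⌈M * (2 * C + 1) + 4 * R⌉ + 1 : ℤ) : ℝ) ≤
          ((|(s k).1| + |(s k).2.1| + |(s k).2.2| : ℤ) : ℝ) := by exact_mod_cast hk
      push_cast at h2 ⊢
      linarith
    have hpos : 0 < 2 * C + 1 := by linarith
    nlinarith [hsum, hcast]
  have hev : ∀ᶠ k in atTop,
      (((((s k).1 : ℝ) / ((s k).2.2 : ℝ), ((s k).2.1 : ℝ) / ((s k).2.2 : ℝ))) : ℝ × ℝ) ∈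
        Metric.closedBall (0 : ℝ × ℝ) (C + 1) := by
    filter_upwards [hplarge] with k hk
    have hp1 : (1 : ℝ) ≤ |((s k).2.2 : ℝ)| := le_trans hM1 hk
    have hp0 : (0 : ℝ) < |((s k).2.2 : ℝ)| := by linarith
    have h2R : 2 * R ≤ |((s k).2.2 : ℝ)| := le_trans (le_max_left _ _) hk
    have hb : ∀ a : ℝ, |a| ≤ |((s k).2.2 : ℝ)| * C + 2 * R →
        ‖a / ((s k).2.2 : ℝ)‖ ≤ C + 1 := by
      intro a ha
      rw [Real.norm_eq_abs, abs_div, div_le_iff₀ hp0]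
      nlinarith
    rw [Metric.mem_closedBall, dist_zero_right, Prod.norm_def]
    exact max_le (hb _ (key k).1) (hb _ (key k).2)
  exact Metric.isClosed_closedBall.mem_of_tendsto hlim hev

end Aux4

/-- the rotation set of a lift of a torus homeomorphism is nonempty and bounded. -/
theorem stmt14 (F : (ℝ × ℝ) ≃ₜ (ℝ × ℝ)) (hS : commuting F S2) (hT : commuting F T2) :
    (rotSet F S2 T2).Nonempty ∧ Bornology.IsBounded (rotSet F S2 T2) :=
  ⟨Aux3.rotSet_nonempty F hS hT, Aux4.rotSet_bounded F hS hT⟩
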